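/- Let π^t = (π₁^t, π₂^t) be a fully supported strategy profile, μ ∈ (0,1], r an interior reference profile, and for each player i define the gain vector g_i(a) = q_i^{π^t}(a) + μ r_i(a)/π_i^t(a). Let π^{t+1} be the multiplicative-weights update π_i^{t+1}(a) = π_i^t(a) exp(η g_i(a)) / Σ_{a'} π_i^t(a') exp(η g_i(a')) with learning rate η > 0. If η (g_i(a') − g_i(a)) ≤ 1 for all i and all a, a' ∈ A_i, then KL(π^t, π^{t+1}) ≤ η² Σ_{i=1}^{2} Σ_{a∈A_i} Σ_{a'∈A_i} π_i^t(a) π_i^t(a') ( g_i(a') − g_i(a) )². -/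
import Mathlib


open Finset Real

noncomputable section

/-- `p` is a point of the probability simplex over `A`. -/
def isSimplex {A : Type*} [Fintype A] (p : A → ℝ) : Prop :=
  (∀ a, 0 ≤ p a) ∧ ∑ a, p a = 1

/-- `p` is a point of the relative interior of the probability simplex over `A`. -/
def isInterior {A : Type*} [Fintype A] (p : A → ℝ) : Prop :=
  (∀ a, 0 < p a) ∧ ∑ a, p a = 1

/-- Player 1's expected utility in the zero-sum game with payoff `u`. -/
def v1 {A1 A2 : Type*} [Fintype A1] [Fintype A2] (u : A1 → A2 → ℝ)
    (x : A1 → ℝ) (y : A2 → ℝ) : ℝ :=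
  ∑ a, ∑ b, x a * y b * u a b

/-- Player 1's conditional expected utility of action `a` against `y`. -/
def q1 {A1 A2 : Type*} [Fintype A2] (u : A1 → A2 → ℝ) (y : A2 → ℝ) (a : A1) : ℝ :=
  ∑ b, y b * u a b

/-- Player 2's conditional expected utility of action `b` against `x` (utility `-u`). -/
def q2 {A1 A2 : Type*} [Fintype A1] (u : A1 → A2 → ℝ) (x : A1 → ℝ) (b : A2) : ℝ :=
  ∑ a, x a * (- u a b)

/-- Kullback–Leibler divergence. -/
def KL {A : Type*} [Fintype A] (p q : A → ℝ) : ℝ :=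
  ∑ a, p a * Real.log (p a / q a)

/-- Sum of KL divergences over the two players. -/
def KL2 {A1 A2 : Type*} [Fintype A1] [Fintype A2]
    (σ σ' : (A1 → ℝ) × (A2 → ℝ)) : ℝ :=
  KL σ.1 σ'.1 + KL σ.2 σ'.2

/-- `σ` is a stationary point of the replicator-mutator dynamics with mutation
rate `μ` and reference profile `r`. -/
def isStationary {A1 A2 : Type*} [Fintype A1] [Fintype A2] (u : A1 → A2 → ℝ) (μ : ℝ)
    (r σ : (A1 → ℝ) × (A2 → ℝ)) : Prop :=
  isSimplex σ.1 ∧ isSimplex σ.2 ∧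
  (∀ a, σ.1 a * (q1 u σ.2 a - v1 u σ.1 σ.2) + μ * (r.1 a - σ.1 a) = 0) ∧
  (∀ b, σ.2 b * (q2 u σ.1 b - (- v1 u σ.1 σ.2)) + μ * (r.2 b - σ.2 b) = 0)

/-- One multiplicative-weights step with learning rate `η` and gain vector `g`. -/
def mwuStep {A : Type*} [Fintype A] (η : ℝ) (g p : A → ℝ) : A → ℝ :=
  fun a => p a * Real.exp (η * g a) / ∑ a', p a' * Real.exp (η * g a')

/-- Player 1's mutation gradient. -/
def qmu1 {A1 A2 : Type*} [Fintype A2] (u : A1 → A2 → ℝ) (μ : ℝ) (r1 : A1 → ℝ)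
    (x : A1 → ℝ) (y : A2 → ℝ) (a : A1) : ℝ :=
  q1 u y a + μ / x a * (r1 a - x a)

/-- Player 2's mutation gradient. -/
def qmu2 {A1 A2 : Type*} [Fintype A1] (u : A1 → A2 → ℝ) (μ : ℝ) (r2 : A2 → ℝ)
    (x : A1 → ℝ) (y : A2 → ℝ) (b : A2) : ℝ :=
  q2 u x b + μ / y b * (r2 b - y b)

/-- `σ` is a trajectory of M2WU with full feedback, learning rates `η`. -/
def isM2WU {A1 A2 : Type*} [Fintype A1] [Fintype A2] (u : A1 → A2 → ℝ) (μ : ℝ)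
    (r : (A1 → ℝ) × (A2 → ℝ)) (η : ℕ → ℝ) (σ : ℕ → (A1 → ℝ) × (A2 → ℝ)) : Prop :=
  ∀ t, (σ (t+1)).1 = mwuStep (η t) (qmu1 u μ r.1 (σ t).1 (σ t).2) (σ t).1 ∧
       (σ (t+1)).2 = mwuStep (η t) (qmu2 u μ r.2 (σ t).1 (σ t).2) (σ t).2

/-- Exploitability of a strategy profile. -/
def explt {A1 A2 : Type*} [Fintype A1] [Fintype A2] (u : A1 → A2 → ℝ)
    (σ : (A1 → ℝ) × (A2 → ℝ)) : ℝ :=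
  (⨆ x : {p : A1 → ℝ // isSimplex p}, v1 u x.1 σ.2) +
  (⨆ y : {p : A2 → ℝ // isSimplex p}, - v1 u σ.1 y.1)

/-- Nash equilibrium of the two-player zero-sum game with payoff `u`. -/
def isNash {A1 A2 : Type*} [Fintype A1] [Fintype A2] (u : A1 → A2 → ℝ)
    (σ : (A1 → ℝ) × (A2 → ℝ)) : Prop :=
  isSimplex σ.1 ∧ isSimplex σ.2 ∧
  (∀ y, isSimplex y → v1 u σ.1 σ.2 ≤ v1 u σ.1 y) ∧
  (∀ x, isSimplex x → v1 u x σ.2 ≤ v1 u σ.1 σ.2)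

/-- ℓ¹ norm of a finitely supported vector. -/
def l1norm {A : Type*} [Fintype A] (p : A → ℝ) : ℝ := ∑ a, |p a|

/-- Euclidean distance between two profiles (concatenated coordinates). -/
def dist2 {A1 A2 : Type*} [Fintype A1] [Fintype A2]
    (σ σ' : (A1 → ℝ) × (A2 → ℝ)) : ℝ :=
  Real.sqrt ((∑ a, (σ.1 a - σ'.1 a) ^ 2) + (∑ b, (σ.2 b - σ'.2 b) ^ 2))

lemma exp_le_one_add_add_sq {z : ℝ} (hz : z ≤ 1) : Real.exp z ≤ 1 + z + z ^ 2 := by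
  rcases le_or_gt (-1) z with h | h
  · have habs : |z| ≤ 1 := abs_le.2 ⟨h, hz⟩
    have hb := Real.exp_bound habs (by norm_num : 0 < 3)
    norm_num [Finset.sum_range_succ, Nat.factorial] at hb
    have h2 : |z| ^ 3 ≤ z ^ 2 := by
      have e1 : |z| ^ 3 = |z| * z ^ 2 := by rw [pow_succ, sq_abs]; ring
      rw [e1]
      nlinarith [sq_nonneg z, abs_nonneg z]
    have h3 := (abs_sub_le_iff.1 hb).1
    nlinarith [sq_nonneg z]
  · have h1 : Real.exp z ≤ Real.exp (-1) := Real.exp_le_exp.2 (by linarith)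
    have h2 : Real.exp (-1) < 1 := by
      have := Real.exp_lt_one_iff.2 (by norm_num : (-1:ℝ) < 0)
      exact this
    nlinarith [sq_nonneg (z + 1)]

lemma kl_step_bound {A : Type*} [Fintype A] (p g : A → ℝ)
    (hpos : ∀ a, 0 < p a) (hsum : ∑ a, p a = 1) (η : ℝ) (hη : 0 < η)
    (hsmall : ∀ a a', η * (g a' - g a) ≤ 1) :
    KL p (mwuStep η g p) ≤ η ^ 2 * ∑ a, ∑ a', p a * p a' * (g a' - g a) ^ 2 := by
  have hne : (Finset.univ : Finset A).Nonempty := by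
    rcases (Finset.univ (α := A)).eq_empty_or_nonempty with h | h
    · rw [h] at hsum; simp at hsum
    · exact h
  set m : ℝ := ∑ a, p a * g a with hm
  set Q : ℝ := ∑ a, p a * g a ^ 2 with hQ
  set d : A → ℝ := fun a => η * g a - η * m with hd
  set Z : ℝ := ∑ a', p a' * Real.exp (η * g a') with hZ
  set S : ℝ := ∑ a, p a * Real.exp (d a) with hS
  have hZpos : 0 < Z :=
    Finset.sum_pos (fun a _ => mul_pos (hpos a) (Real.exp_pos _)) hne
  have hSpos : 0 < S :=
    Finset.sum_pos (fun a _ => mul_pos (hpos a) (Real.exp_pos _)) hne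
  -- KL = log Z - η m
  have hKL : KL p (mwuStep η g p) = Real.log Z - η * m := by
    have step : ∀ a, p a * Real.log (p a / (mwuStep η g p a))
        = p a * Real.log Z - η * (p a * g a) := by
      intro a
      have hpa : p a ≠ 0 := (hpos a).ne'
      have hexp : Real.exp (η * g a) ≠ 0 := (Real.exp_pos _).ne'
      have : p a / (mwuStep η g p a) = Z / Real.exp (η * g a) := by
        rw [mwuStep]
        field_simp
        ring
      rw [this, Real.log_div hZpos.ne' hexp, Real.log_exp]
      ring
    rw [KL, Finset.sum_congr rfl (fun a _ => step a), Finset.sum_sub_distrib,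
      ← Finset.sum_mul, hsum, ← Finset.mul_sum, ← hm]
    ring
  -- Z = exp(η m) * S
  have hZS : Z = Real.exp (η * m) * S := by
    rw [hZ, hS, Finset.mul_sum]
    refine Finset.sum_congr rfl fun a _ => ?_
    have e1 : Real.exp (η * g a) = Real.exp (η * m) * Real.exp (d a) := by
      rw [← Real.exp_add]
      congr 1
      simp only [hd]
      ring
    rw [e1]
    ring
  have hKL2 : KL p (mwuStep η g p) = Real.log S := by
    rw [hKL, hZS, Real.log_mul (Real.exp_pos _).ne' hSpos.ne', Real.log_exp]
    ring
  -- d a ≤ 1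
  have hdle : ∀ a, d a ≤ 1 := by
    intro a
    have e1 : ∑ a', p a' * (η * (g a - g a'))
        = (∑ a', p a') * (η * g a) - η * ∑ a', p a' * g a' := by
      rw [Finset.sum_mul, Finset.mul_sum, ← Finset.sum_sub_distrib]
      exact Finset.sum_congr rfl fun a' _ => by ring
    have e2 : d a = ∑ a', p a' * (η * (g a - g a')) := by
      rw [e1, hsum, ← hm]
      simp only [hd]
      ring
    rw [e2]
    calc ∑ a', p a' * (η * (g a - g a'))
        ≤ ∑ a', p a' * 1 :=
          Finset.sum_le_sum fun a' _ =>
            mul_le_mul_of_nonneg_left (hsmall a' a) (hpos a').le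
      _ = 1 := by rw [← Finset.sum_mul, hsum, one_mul]
  -- ∑ p d = 0
  have hdzero : ∑ a, p a * d a = 0 := by
    simp only [hd, mul_sub]
    rw [Finset.sum_sub_distrib]
    have e1 : ∑ a, p a * (η * g a) = η * m := by
      rw [hm, Finset.mul_sum]
      exact Finset.sum_congr rfl fun a _ => by ring
    have e2 : ∑ a, p a * (η * m) = η * m := by
      rw [← Finset.sum_mul, hsum, one_mul]
    rw [e1, e2, sub_self]
  set V : ℝ := ∑ a, p a * (d a) ^ 2 with hV
  -- S ≤ 1 + V
  have hSle : S ≤ 1 + V := by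
    have : S ≤ ∑ a, p a * (1 + d a + (d a) ^ 2) :=
      Finset.sum_le_sum fun a _ =>
        mul_le_mul_of_nonneg_left (exp_le_one_add_add_sq (hdle a)) (hpos a).le
    calc S ≤ ∑ a, p a * (1 + d a + (d a) ^ 2) := this
      _ = (∑ a, p a) + (∑ a, p a * d a) + V := by
          rw [hV]
          rw [← Finset.sum_add_distrib, ← Finset.sum_add_distrib]
          exact Finset.sum_congr rfl fun a _ => by ring
      _ = 1 + V := by rw [hsum, hdzero]; ring
  have hVnonneg : 0 ≤ V :=
    Finset.sum_nonneg fun a _ => mul_nonneg (hpos a).le (sq_nonneg _)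
  have hlogS : Real.log S ≤ V := by
    calc Real.log S ≤ S - 1 := Real.log_le_sub_one_of_pos hSpos
      _ ≤ V := by linarith
  -- V = η^2 * (Q - m^2)
  have hVval : V = η ^ 2 * (Q - m ^ 2) := by
    have e : ∀ a, p a * (d a) ^ 2
        = η ^ 2 * (p a * g a ^ 2) - 2 * η ^ 2 * m * (p a * g a)
          + η ^ 2 * m ^ 2 * p a := fun a => by rw [hd]; ring
    rw [hV, Finset.sum_congr rfl (fun a _ => e a)]
    rw [Finset.sum_add_distrib, Finset.sum_sub_distrib,
      ← Finset.mul_sum, ← Finset.mul_sum, ← Finset.mul_sum, ← hQ, ← hm, hsum]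
    ring
  -- double sum = 2(Q - m^2)
  have hDS : ∑ a, ∑ a', p a * p a' * (g a' - g a) ^ 2 = 2 * (Q - m ^ 2) := by
    have inner : ∀ a, ∑ a', p a * p a' * (g a' - g a) ^ 2
        = p a * Q - (2 * m) * (p a * g a) + p a * g a ^ 2 := by
      intro a
      have e : ∀ a', p a * p a' * (g a' - g a) ^ 2
          = p a * (p a' * g a' ^ 2) - (2 * (p a * g a)) * (p a' * g a')
            + (p a * g a ^ 2) * p a' := fun a' => by ring
      rw [Finset.sum_congr rfl (fun a' _ => e a')]
      rw [Finset.sum_add_distrib, Finset.sum_sub_distrib,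
        ← Finset.mul_sum, ← Finset.mul_sum, ← Finset.mul_sum, ← hQ, ← hm, hsum]
      ring
    rw [Finset.sum_congr rfl (fun a _ => inner a)]
    rw [Finset.sum_add_distrib, Finset.sum_sub_distrib,
      ← Finset.sum_mul, ← Finset.mul_sum, ← hQ, hsum, ← hm]
    ring
  rw [hKL2, hDS]
  calc Real.log S ≤ V := hlogS
    _ = η ^ 2 * (Q - m ^ 2) := hVval
    _ ≤ η ^ 2 * (2 * (Q - m ^ 2)) := by nlinarith [sq_nonneg η, hVnonneg, hVval]

/-- **One-step KL bound for the multiplicative-weights update with mutated gains.** -/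
theorem mwu_step_kl_bound {A1 A2 : Type*} [Fintype A1] [Fintype A2]
    (u : A1 → A2 → ℝ)
    (μ : ℝ) (hμ : 0 < μ ∧ μ ≤ 1)
    (r : (A1 → ℝ) × (A2 → ℝ)) (hr1 : isInterior r.1) (hr2 : isInterior r.2)
    (x : A1 → ℝ) (y : A2 → ℝ) (hx : isInterior x) (hy : isInterior y)
    (g1 : A1 → ℝ) (g2 : A2 → ℝ)
    (hg1 : ∀ a, g1 a = q1 u y a + μ * r.1 a / x a)
    (hg2 : ∀ b, g2 b = q2 u x b + μ * r.2 b / y b)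
    (η : ℝ) (hη : 0 < η)
    (hsmall1 : ∀ a a', η * (g1 a' - g1 a) ≤ 1)
    (hsmall2 : ∀ b b', η * (g2 b' - g2 b) ≤ 1)
    (x' : A1 → ℝ) (y' : A2 → ℝ)
    (hx' : x' = mwuStep η g1 x) (hy' : y' = mwuStep η g2 y) :
    KL x x' + KL y y' ≤
      η ^ 2 * ((∑ a, ∑ a', x a * x a' * (g1 a' - g1 a) ^ 2) +
               (∑ b, ∑ b', y b * y b' * (g2 b' - g2 b) ^ 2)) := by
  obtain ⟨hxpos, hxsum⟩ := hx
  obtain ⟨hypos, hysum⟩ := hy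
  have h1 := kl_step_bound x g1 hxpos hxsum η hη hsmall1
  have h2 := kl_step_bound y g2 hypos hysum η hη hsmall2
  rw [hx', hy']
  rw [mul_add]
  exact add_le_add h1 h2
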